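/- Fix x ∈ ℂ³ nonzero with associated rank-one symmetric tensor x·xᵀ. The set of 3×3 complex symmetric matrices of rank ≤ 1 that are orthogonal (under the trace form) to the tangent space of the rank-one locus at x·xᵀ is {y·yᵀ : ⟨x,y⟩ = 0}, i.e., rank-one symmetric matrices built from vectors orthogonal to x. -/

import Mathlib

open Matrix

private lemma tr_aux (y x v : Fin 3 → ℂ) :
    (vecMulVec y y * (vecMulVec x v + vecMulVec v x)).trace
      = 2 * (∑ i, x i * y i) * (∑ i, y i * v i) := by
  have e1 : ∑ i, ∑ k, y i * y k * (x k * v i)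
      = (∑ i, x i * y i) * (∑ i, y i * v i) := by
    rw [Finset.sum_mul_sum, Finset.sum_comm]
    exact Finset.sum_congr rfl fun i _ => Finset.sum_congr rfl fun k _ => by ring
  have e2 : ∑ i, ∑ k, y i * y k * (v k * x i)
      = (∑ i, x i * y i) * (∑ i, y i * v i) := by
    rw [Finset.sum_mul_sum]
    exact Finset.sum_congr rfl fun i _ => Finset.sum_congr rfl fun k _ => by ring
  simp only [Matrix.trace, Matrix.diag, Matrix.mul_apply, Matrix.add_apply,
    vecMulVec_apply, mul_add, Finset.sum_add_distrib]
  rw [e1, e2]; ring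

private lemma rank_one_sym (A : Matrix (Fin 3) (Fin 3) ℂ) (hs : Aᵀ = A)
    (hr : A.rank ≤ 1) : ∃ y : Fin 3 → ℂ, A = vecMulVec y y := by
  rw [Matrix.rank] at hr
  obtain ⟨v₀, hv₀⟩ := finrank_le_one_iff.mp hr
  set u : Fin 3 → ℂ := (v₀ : Fin 3 → ℂ) with hu
  have hcol : ∀ j : Fin 3, ∃ c : ℂ, ∀ i, A i j = c * u i := by
    intro j
    have hmem : (fun i => A i j) ∈ LinearMap.range A.mulVecLin := by
      refine ⟨Pi.single j 1, ?_⟩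
      ext i
      simp [Matrix.mulVecLin_apply, Matrix.mulVec_single]
    obtain ⟨c, hc⟩ := hv₀ ⟨_, hmem⟩
    refine ⟨c, fun i => ?_⟩
    have := congrFun (congrArg Subtype.val hc) i
    simpa [hu] using this.symm
  choose c hc using hcol
  by_cases hu0 : u = 0
  · refine ⟨0, ?_⟩
    ext i j
    simp [hc j i, hu0, vecMulVec_apply]
  · obtain ⟨i₀, hi₀'⟩ := Function.ne_iff.mp hu0
    have hi₀ : u i₀ ≠ 0 := by simpa using hi₀'
    have hsym : ∀ i j, A i j = A j i := fun i j => by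
      have := congrFun (congrFun hs j) i
      simpa [transpose_apply] using this
    have hct : ∀ j, c j = (c i₀ / u i₀) * u j := by
      intro j
      have h1 : c j * u i₀ = c i₀ * u j := by
        have := hsym i₀ j
        rw [hc j i₀, hc i₀ j] at this
        exact this
      rw [div_mul_eq_mul_div, eq_div_iff hi₀]
      linear_combination h1
    obtain ⟨s, hs2⟩ := IsAlgClosed.exists_pow_nat_eq (k := ℂ) (c i₀ / u i₀) (n := 2) zero_lt_two
    refine ⟨s • u, ?_⟩
    ext i j
    rw [hc j i]
    simp only [vecMulVec_apply, Pi.smul_apply, smul_eq_mul]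
    rw [hct j]
    rw [← hs2]
    ring

/-- For `x ∈ ℂ³` nonzero, the rank ≤ 1 symmetric 3×3 matrices that are orthogonal,
for the trace form, to the tangent space `{x·vᵀ + v·xᵀ}` of the rank-one locus at
`x·xᵀ`, are exactly the matrices `y·yᵀ` with `⟨x,y⟩ = 0`. -/
theorem stmt_9 (x : Fin 3 → ℂ) (hx : x ≠ 0) :
    {A : Matrix (Fin 3) (Fin 3) ℂ | Aᵀ = A ∧ A.rank ≤ 1 ∧
      ∀ v : Fin 3 → ℂ, (A * (vecMulVec x v + vecMulVec v x)).trace = 0}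
    = {A : Matrix (Fin 3) (Fin 3) ℂ |
        ∃ y : Fin 3 → ℂ, A = vecMulVec y y ∧ ∑ i, x i * y i = 0} := by
  ext A
  simp only [Set.mem_setOf_eq]
  constructor
  · rintro ⟨hs, hr, htr⟩
    obtain ⟨y, rfl⟩ := rank_one_sym A hs hr
    refine ⟨y, rfl, ?_⟩
    by_contra hxy
    have hy : y = 0 := by
      funext j
      have := htr (Pi.single j 1)
      rw [tr_aux] at this
      have h2 : (∑ i, y i * (Pi.single j 1 : Fin 3 → ℂ) i) = y j := by
        simp [Pi.single_apply, mul_ite]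
      rw [h2] at this
      rcases mul_eq_zero.mp this with h | h
      · rcases mul_eq_zero.mp h with h' | h'
        · norm_num at h'
        · exact absurd h' hxy
      · exact h
    apply hxy
    simp [hy]
  · rintro ⟨y, rfl, hxy⟩
    refine ⟨?_, ?_, fun v => by rw [tr_aux, hxy]; ring⟩
    · ext i j; simp [vecMulVec_apply, mul_comm]
    · rw [show vecMulVec y y = replicateCol Unit y * replicateRow Unit y from vecMulVec_eq Unit y y]
      exact (Matrix.rank_mul_le_left _ _).trans
        ((Matrix.rank_le_card_width _).trans (by simp))
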